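/- (Target model error under cross-sampling; Lemma 2 of the paper, steps h ≥ 1.) Let S be a finite state space, 𝒜 a finite action set of size A, H ∈ ℕ, d₀ an initial distribution on S, d ∈ ℕ, and K ∈ ℕ. Let P_1,…,P_K and P_target be transition models that are low rank with a shared feature: P_{k;h}(s'|s,a) = ⟨φ*_h(s,a), μ*_{k;h}(s')⟩ and P_{target;h}(s'|s,a) = ⟨φ*_h(s,a), μ*_{target;h}(s')⟩, where ‖φ*_h(s,a)‖₂ ≤ 1 for all h,s,a. Assume the point-wise linear span condition: for every h and s' there are reals α_{k;h}(s') with μ*_{target;h}(s') = Σ_{k=1}^K α_{k;h}(s') μ*_{k;h}(s') and |α_{k;h}(s')| ≤ α_max. Assume there are policies π_1,…,π_K and λ_min > 0 with λ_min( Σ_{(s,a)} d^{π_k}_{P_k;h}(s,a) φ*_h(s,a)φ*_h(s,a)ᵀ ) ≥ λ_min for every k and every h ∈ {0,…,H−1}. Let φ̂_h : S×𝒜 → ℝ^d and μ̂_{k;h} : S → ℝ^d be arbitrary, define the error err_{k;h}(s,a) := Σ_{s'} |⟨φ̂_h(s,a), μ̂_{k;h}(s')⟩ − ⟨φ*_h(s,a),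 μ*_{k;h}(s')⟩|, and for h ∈ {1,…,H−1} let ν_{kj;h} be the distribution on S×𝒜 given by ν_{kj;h}(s,a) := (1/A) Σ_{(s̃,ã)} d^{π_k}_{P_k;h−1}(s̃,ã) P_{j;h−1}(s|s̃,ã). Suppose the cross-sampled MLE guarantee: for every h ∈ {1,…,H−1}, Σ_{k=1}^K Σ_{j=1}^K E_{(s,a)∼ν_{kj;h}}[ err_{k;h}(s,a)² ] ≤ ζ for some ζ ≥ 0. Define μ̃_h(s') := Σ_{k=1}^K α_{k;h}(s') μ̂_{k;h}(s'). Then for every h ∈ {1,…,H−1} and every policy π: Σ_{(s,a)} d^π_{P_target;h}(s,a) · Σ_{s'} |⟨φ̂_h(s,a), μ̃_h(s')⟩ − P_{target;h}(s'|s,a)| ≤ √( A · α_max³ · K · ζ / λ_min ). Moreover, if additionally ‖Σ_{s'} g(s') μ̂_{k;h}(s')‖₂ ≤ √d for every g : S → [−1,1] and every k, then for every g : S → [0,1], ‖Σ_{s'} g(s') μ̃_h(s')‖₂ ≤ ᾱ√d, where ᾱ := Σ_{k=1}^K max_{s'} |α_{k;h}(s')|. -/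

import Mathlib

/-! Target model error under cross-sampling (Lemma 2 of the paper, steps h ≥ 1). -/

noncomputable section

open Finset

/-- `p` is a probability distribution on the finite type `X`. -/
def IsDist {X : Type*} [Fintype X] (p : X → ℝ) : Prop :=
  (∀ x, 0 ≤ p x) ∧ (∑ x, p x) = 1

variable {S Act : Type*} [Fintype S] [Fintype Act]

/-- Occupancy measure `d^π_{P;h}(s,a)`: the probability that, executing the policy `π`
in the transition model `P` starting from `d0`, the state-action pair at step `h`
is `(s,a)`. -/
def occ (d0 : S → ℝ) (π : ℕ → S → Act → ℝ) (P : ℕ → S → Act → S → ℝ) :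
    ℕ → S → Act → ℝ
  | 0 => fun s a => d0 s * π 0 s a
  | h + 1 => fun s' a' => (∑ s, ∑ a, occ d0 π P h s a * P h s a s') * π (h + 1) s' a'

open Matrix

/-- The smallest eigenvalue of a symmetric matrix, expressed as the minimum of the
Rayleigh quotient `vᵀ M v` over unit vectors `v`. -/
noncomputable def lamMin {d : ℕ} (M : Matrix (Fin d) (Fin d) ℝ) : ℝ :=
  sInf {x | ∃ v : Fin d → ℝ, (∑ i, v i ^ 2) = 1 ∧ x = v ⬝ᵥ M.mulVec v}

/-! ### Auxiliary lemmas -/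

/-- Weighted Cauchy–Schwarz / Jensen inequality. -/
lemma weighted_cs {X : Type*} [Fintype X] (w f : X → ℝ) (hw : ∀ x, 0 ≤ w x) :
    (∑ x, w x * f x) ^ 2 ≤ (∑ x, w x) * (∑ x, w x * f x ^ 2) := by
  have h := Finset.sum_mul_sq_le_sq_mul_sq Finset.univ
    (fun x => Real.sqrt (w x)) (fun x => Real.sqrt (w x) * f x)
  have e1 : ∀ x : X, Real.sqrt (w x) * (Real.sqrt (w x) * f x) = w x * f x := fun x => by
    rw [← mul_assoc, Real.mul_self_sqrt (hw x)]
  have e2 : ∀ x : X, Real.sqrt (w x) ^ 2 = w x := fun x => Real.sq_sqrt (hw x)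
  have e3 : ∀ x : X, (Real.sqrt (w x) * f x) ^ 2 = w x * f x ^ 2 := fun x => by
    rw [mul_pow, e2]
  simp only [e1, e2, e3] at h
  exact h

/-- Cauchy–Schwarz for the Euclidean inner product. -/
lemma abs_dot_le {n : ℕ} (x y : Fin n → ℝ) :
    |∑ i, x i * y i| ≤ Real.sqrt (∑ i, x i ^ 2) * Real.sqrt (∑ i, y i ^ 2) := by
  rw [← Real.sqrt_sq_eq_abs, ← Real.sqrt_mul (by positivity)]
  exact Real.sqrt_le_sqrt (Finset.sum_mul_sq_le_sq_mul_sq _ _ _)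

lemma sum_sqrt_le {K : ℕ} (x : Fin K → ℝ) (hx : ∀ k, 0 ≤ x k) :
    ∑ k, Real.sqrt (x k) ≤ Real.sqrt ((K : ℝ) * ∑ k, x k) := by
  have h := Real.sum_mul_le_sqrt_mul_sqrt Finset.univ (fun _ : Fin K => (1:ℝ))
    (fun k => Real.sqrt (x k))
  simp only [one_mul, one_pow, Finset.sum_const, Finset.card_univ, Fintype.card_fin,
    nsmul_eq_mul, mul_one, Real.sq_sqrt (hx _)] at h
  calc ∑ k, Real.sqrt (x k) ≤ Real.sqrt K * Real.sqrt (∑ k, x k) := h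
    _ = Real.sqrt ((K : ℝ) * ∑ k, x k) := (Real.sqrt_mul (by positivity) _).symm

lemma sqrt_sum_sq_add {dd : ℕ} (u v : Fin dd → ℝ) :
    Real.sqrt (∑ i, (u i + v i) ^ 2)
      ≤ Real.sqrt (∑ i, u i ^ 2) + Real.sqrt (∑ i, v i ^ 2) := by
  have hu : (0:ℝ) ≤ ∑ i, u i ^ 2 := Finset.sum_nonneg fun i _ => sq_nonneg _
  have hv : (0:ℝ) ≤ ∑ i, v i ^ 2 := Finset.sum_nonneg fun i _ => sq_nonneg _
  rw [show Real.sqrt (∑ i, u i ^ 2) + Real.sqrt (∑ i, v i ^ 2)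
      = Real.sqrt ((Real.sqrt (∑ i, u i ^ 2) + Real.sqrt (∑ i, v i ^ 2)) ^ 2) from
    (Real.sqrt_sq (by positivity)).symm]
  apply Real.sqrt_le_sqrt
  have hcs := Real.sum_mul_le_sqrt_mul_sqrt Finset.univ u v
  have e : ∑ i, (u i + v i) ^ 2 = ∑ i, u i ^ 2 + 2 * ∑ i, u i * v i + ∑ i, v i ^ 2 := by
    rw [Finset.mul_sum, ← Finset.sum_add_distrib, ← Finset.sum_add_distrib]
    exact Finset.sum_congr rfl fun i _ => by ring
  rw [e, add_sq, Real.sq_sqrt hu, Real.sq_sqrt hv]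
  nlinarith [hcs]

/-- Triangle inequality for Euclidean norms of finitely many vectors. -/
lemma sqrt_sum_sq_sum_le {dd KK : ℕ} (y : Fin KK → Fin dd → ℝ) :
    Real.sqrt (∑ i, (∑ k, y k i) ^ 2) ≤ ∑ k, Real.sqrt (∑ i, (y k i) ^ 2) := by
  induction (Finset.univ : Finset (Fin KK)) using Finset.cons_induction with
  | empty => simp
  | cons k s hk ih =>
      simp only [Finset.sum_cons]
      calc Real.sqrt (∑ i, (y k i + ∑ k' ∈ s, y k' i) ^ 2)
          ≤ Real.sqrt (∑ i, y k i ^ 2) + Real.sqrt (∑ i, (∑ k' ∈ s, y k' i) ^ 2) :=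
            sqrt_sum_sq_add _ _
        _ ≤ Real.sqrt (∑ i, y k i ^ 2) + ∑ k' ∈ s, Real.sqrt (∑ i, y k' i ^ 2) := by
            linarith [ih]

lemma occ_nonneg (d0 : S → ℝ) (hd0 : IsDist d0) (π : ℕ → S → Act → ℝ)
    (hπ : ∀ t s, IsDist (π t s)) (P : ℕ → S → Act → S → ℝ)
    (hP : ∀ h s a, IsDist (P h s a)) (h : ℕ) (s : S) (a : Act) :
    0 ≤ occ d0 π P h s a := by
  induction h generalizing s a with
  | zero => exact mul_nonneg (hd0.1 s) ((hπ 0 s).1 a)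
  | succ n ih =>
      refine mul_nonneg (Finset.sum_nonneg fun s' _ => Finset.sum_nonneg fun a' _ =>
        mul_nonneg (ih s' a') ((hP n s' a').1 s)) ((hπ (n+1) s).1 a)

lemma occ_sum (d0 : S → ℝ) (hd0 : IsDist d0) (π : ℕ → S → Act → ℝ)
    (hπ : ∀ t s, IsDist (π t s)) (P : ℕ → S → Act → S → ℝ)
    (hP : ∀ h s a, IsDist (P h s a)) (h : ℕ) :
    ∑ s, ∑ a, occ d0 π P h s a = 1 := by
  induction h with
  | zero =>
      simp only [occ, ← Finset.mul_sum]
      calc ∑ s, d0 s * ∑ a, π 0 s a = ∑ s, d0 s := by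
            refine Finset.sum_congr rfl fun s _ => by rw [(hπ 0 s).2, mul_one]
        _ = 1 := hd0.2
  | succ n ih =>
      simp only [occ, ← Finset.mul_sum]
      calc ∑ s', (∑ s, ∑ a, occ d0 π P n s a * P n s a s') * ∑ a', π (n+1) s' a'
          = ∑ s', ∑ s, ∑ a, occ d0 π P n s a * P n s a s' := by
            refine Finset.sum_congr rfl fun s' _ => by rw [(hπ (n+1) s').2, mul_one]
        _ = ∑ s, ∑ a, ∑ s', occ d0 π P n s a * P n s a s' := by
            rw [Finset.sum_comm]
            exact Finset.sum_congr rfl fun s _ => Finset.sum_comm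
        _ = ∑ s, ∑ a, occ d0 π P n s a := by
            refine Finset.sum_congr rfl fun s _ => Finset.sum_congr rfl fun a _ => ?_
            rw [← Finset.mul_sum, (hP n s a).2, mul_one]
        _ = 1 := ih

lemma rayleigh_eq {dd : ℕ} (c : S → Act → ℝ) (φ : S → Act → Fin dd → ℝ) (u : Fin dd → ℝ) :
    u ⬝ᵥ (∑ s, ∑ a, c s a • vecMulVec (φ s a) (φ s a)).mulVec u
      = ∑ s, ∑ a, c s a * (∑ i, φ s a i * u i) ^ 2 := by
  simp only [dotProduct, Matrix.mulVec, Matrix.sum_apply, Matrix.smul_apply,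
    vecMulVec_apply, smul_eq_mul, Finset.sum_mul, Finset.mul_sum]
  conv_lhs => enter [2, x]; rw [Finset.sum_comm]
  conv_lhs => enter [2, x, 2, x2]; rw [Finset.sum_comm]
  rw [Finset.sum_comm]
  conv_lhs => enter [2, x2]; rw [Finset.sum_comm]
  refine Finset.sum_congr rfl fun s _ => Finset.sum_congr rfl fun a _ => ?_
  rw [pow_two, Finset.mul_sum, Finset.mul_sum]
  refine Finset.sum_congr rfl fun i _ => ?_
  rw [Finset.sum_mul, Finset.mul_sum]
  refine Finset.sum_congr rfl fun j _ => by ring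

lemma lamMin_bound {dd : ℕ} (c : S → Act → ℝ) (hc : ∀ s a, 0 ≤ c s a)
    (φ : S → Act → Fin dd → ℝ) (u : Fin dd → ℝ) {l : ℝ} (hl0 : 0 ≤ l)
    (hl : l ≤ lamMin (∑ s, ∑ a, c s a • vecMulVec (φ s a) (φ s a))) :
    l * (∑ i, u i ^ 2) ≤ ∑ s, ∑ a, c s a * (∑ i, φ s a i * u i) ^ 2 := by
  by_cases hu : (∑ i, u i ^ 2) = 0
  · rw [hu, mul_zero]
    exact Finset.sum_nonneg fun s _ => Finset.sum_nonneg fun a _ =>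
      mul_nonneg (hc s a) (sq_nonneg _)
  · have hupos : 0 < ∑ i, u i ^ 2 :=
      lt_of_le_of_ne (Finset.sum_nonneg fun i _ => sq_nonneg _) (Ne.symm hu)
    set n := Real.sqrt (∑ i, u i ^ 2) with hn
    have hnpos : 0 < n := Real.sqrt_pos.2 hupos
    have hn2 : n ^ 2 = ∑ i, u i ^ 2 := Real.sq_sqrt hupos.le
    set v : Fin dd → ℝ := fun i => u i / n with hv
    have hv1 : (∑ i, v i ^ 2) = 1 := by
      simp only [hv, div_pow, ← Finset.sum_div]
      rw [hn2, div_self (ne_of_gt hupos)]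
    have hbdd : BddBelow {x | ∃ w : Fin dd → ℝ, (∑ i, w i ^ 2) = 1 ∧
        x = w ⬝ᵥ (∑ s, ∑ a, c s a • vecMulVec (φ s a) (φ s a)).mulVec w} := by
      refine ⟨0, fun x hx => ?_⟩
      obtain ⟨w, hw1, rfl⟩ := hx
      rw [rayleigh_eq]
      exact Finset.sum_nonneg fun s _ => Finset.sum_nonneg fun a _ =>
        mul_nonneg (hc s a) (sq_nonneg _)
    have h2 : l ≤ v ⬝ᵥ (∑ s, ∑ a, c s a • vecMulVec (φ s a) (φ s a)).mulVec v :=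
      le_trans hl (csInf_le hbdd ⟨v, hv1, rfl⟩)
    rw [rayleigh_eq] at h2
    have h3 : ∀ s a, (∑ i, φ s a i * v i) ^ 2 = (∑ i, φ s a i * u i) ^ 2 / n ^ 2 := by
      intro s a
      have e : ∑ i, φ s a i * v i = (∑ i, φ s a i * u i) / n := by
        simp only [hv]
        rw [show (∑ i, φ s a i * (u i / n)) = ∑ i, (φ s a i * u i) / n from
          Finset.sum_congr rfl fun i _ => (mul_div_assoc _ _ _).symm, ← Finset.sum_div]
      rw [e, div_pow]
    have h4 : l ≤ (∑ s, ∑ a, c s a * (∑ i, φ s a i * u i) ^ 2) / n ^ 2 := by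
      refine le_trans h2 (le_of_eq ?_)
      simp only [h3]
      rw [Finset.sum_div]
      refine Finset.sum_congr rfl fun s _ => ?_
      rw [Finset.sum_div]
      exact Finset.sum_congr rfl fun a _ => (mul_div_assoc _ _ _).symm
    have h5 := (le_div_iff₀ (by positivity : (0:ℝ) < n ^ 2)).1 h4
    calc l * (∑ i, u i ^ 2) = l * n ^ 2 := by rw [hn2]
      _ ≤ _ := h5


/-- **Target model error under cross-sampling** (steps `h ≥ 1`).
Under the shared-feature low-rank structure, the point-wise linear span condition, the
eigenvalue coverage of the exploratory policies `π_k`, and the cross-sampled MLE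
guarantee, the representation `φ̂` with `μ̃_h(s') := Σ_k α_{k;h}(s') μ̂_{k;h}(s')` is an
approximately linear model of the target task in an average sense, under every policy:
the expected TV error at step `h` is at most `√(A αmax³ K ζ / λmin)`.  Moreover, under
the `√d` normalization of the `μ̂`'s, `‖Σ_{s'} g(s') μ̃_h(s')‖₂ ≤ ᾱ √d` for every
`g : S → [0,1]`, with `ᾱ := Σ_k max_{s'} |α_{k;h}(s')|`. -/
theorem target_model_error_cross_sampling [Nonempty S]
    (H d K : ℕ)
    (d0 : S → ℝ) (hd0 : IsDist d0)
    (Pk : Fin K → ℕ → S → Act → S → ℝ) (hPk : ∀ k h s a, IsDist (Pk k h s a))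
    (Pt : ℕ → S → Act → S → ℝ) (hPt : ∀ h s a, IsDist (Pt h s a))
    (φstar : ℕ → S → Act → Fin d → ℝ)
    (hφ : ∀ h s a, Real.sqrt (∑ i, φstar h s a i ^ 2) ≤ 1)
    (μstar : Fin K → ℕ → S → Fin d → ℝ) (μstarT : ℕ → S → Fin d → ℝ)
    (hlowk : ∀ k h s a s', Pk k h s a s' = ∑ i, φstar h s a i * μstar k h s' i)
    (hlowt : ∀ h s a s', Pt h s a s' = ∑ i, φstar h s a i * μstarT h s' i)
    (α : Fin K → ℕ → S → ℝ) (αmax : ℝ)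
    (hspan : ∀ h s' i, μstarT h s' i = ∑ k, α k h s' * μstar k h s' i)
    (hαmax : ∀ k h s', |α k h s'| ≤ αmax)
    (πk : Fin K → ℕ → S → Act → ℝ) (hπk : ∀ k h s, IsDist (πk k h s))
    (lmin : ℝ) (hlmin : 0 < lmin)
    (hcov : ∀ k h, h < H →
      lmin ≤ lamMin (∑ s, ∑ a, occ d0 (πk k) (Pk k) h s a •
        vecMulVec (φstar h s a) (φstar h s a)))
    (φhat : ℕ → S → Act → Fin d → ℝ) (μhat : Fin K → ℕ → S → Fin d → ℝ)
    (ζ : ℝ) (hζ : 0 ≤ ζ)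
    (hmle : ∀ h, 1 ≤ h → h < H →
      ∑ k, ∑ j, ∑ s, ∑ a,
        ((1 / (Fintype.card Act : ℝ)) *
            ∑ s₀, ∑ a₀, occ d0 (πk k) (Pk k) (h - 1) s₀ a₀ * Pk j (h - 1) s₀ a₀ s) *
          (∑ s', |(∑ i, φhat h s a i * μhat k h s' i)
                  - (∑ i, φstar h s a i * μstar k h s' i)|) ^ 2
        ≤ ζ) :
    (∀ h, 1 ≤ h → h < H → ∀ (π : ℕ → S → Act → ℝ), (∀ t s, IsDist (π t s)) →
      ∑ s, ∑ a, occ d0 π Pt h s a *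
          (∑ s', |(∑ i, φhat h s a i * (∑ k, α k h s' * μhat k h s' i)) - Pt h s a s'|)
        ≤ Real.sqrt ((Fintype.card Act : ℝ) * αmax ^ 3 * (K : ℝ) * ζ / lmin))
    ∧ ((∀ k h (g : S → ℝ), (∀ s', -1 ≤ g s' ∧ g s' ≤ 1) →
          Real.sqrt (∑ i, (∑ s', g s' * μhat k h s' i) ^ 2) ≤ Real.sqrt d) →
        ∀ h, 1 ≤ h → h < H → ∀ (g : S → ℝ), (∀ s', 0 ≤ g s' ∧ g s' ≤ 1) →
          Real.sqrt (∑ i, (∑ s', g s' * (∑ k, α k h s' * μhat k h s' i)) ^ 2)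
            ≤ (∑ k, Finset.univ.sup' Finset.univ_nonempty (fun s' : S => |α k h s'|))
              * Real.sqrt d) := by
  classical
  constructor
  · intro h h1 hH π hπ
    rcases isEmpty_or_nonempty Act with hAe | hAne
    · exact absurd (hπ 0 (Classical.arbitrary S)).2 (by simp)
    rcases Nat.eq_zero_or_pos K with hK0 | hKpos
    · exfalso
      subst hK0
      obtain ⟨s0⟩ := (inferInstance : Nonempty S)
      obtain ⟨a0⟩ := hAne
      have h2 := (hPt 0 s0 a0).2
      have hz : ∀ (s' : S) i, μstarT 0 s' i = 0 := by
        intro s' i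
        rw [hspan]
        simp
      have h3 : ∀ s' : S, Pt 0 s0 a0 s' = 0 := by
        intro s'
        rw [hlowt]
        simp [hz]
      have h4 : (∑ s' : S, Pt 0 s0 a0 s') = 0 := Finset.sum_eq_zero fun s' _ => h3 s'
      rw [h2] at h4
      exact one_ne_zero h4
    obtain ⟨m, rfl⟩ : ∃ m, h = m + 1 := ⟨h - 1, (Nat.succ_pred_eq_of_pos h1).symm⟩
    have hmH : m < H := Nat.lt_of_succ_lt hH
    have hα0 : 0 ≤ αmax :=
      le_trans (abs_nonneg _) (hαmax ⟨0, hKpos⟩ 0 (Classical.arbitrary S))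
    have hA0 : (0:ℝ) < (Fintype.card Act : ℝ) := by exact_mod_cast Fintype.card_pos
    set err : Fin K → S → Act → ℝ := fun k s a =>
      ∑ s', |(∑ i, φhat (m+1) s a i * μhat k (m+1) s' i)
             - (∑ i, φstar (m+1) s a i * μstar k (m+1) s' i)| with herr_def
    have herr0 : ∀ k s a, 0 ≤ err k s a := fun k s a =>
      Finset.sum_nonneg fun s' _ => abs_nonneg _
    set β : Fin K → S → ℝ := fun k s => ∑ a, π (m+1) s a * err k s a with hβ_def
    set W : Fin K → Fin d → ℝ := fun k i => ∑ s, μstarT m s i * β k s with hW_def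
    set E : Fin K → Fin K → ℝ := fun k j => ∑ s, ∑ a,
      ((1 / (Fintype.card Act : ℝ)) *
        ∑ s₀, ∑ a₀, occ d0 (πk k) (Pk k) m s₀ a₀ * Pk j m s₀ a₀ s) * (err k s a) ^ 2
      with hE_def
    have hE0 : ∀ k j, 0 ≤ E k j := by
      intro k j
      rw [hE_def]
      refine Finset.sum_nonneg fun s _ => Finset.sum_nonneg fun a _ =>
        mul_nonneg (mul_nonneg (by positivity)
          (Finset.sum_nonneg fun s₀ _ => Finset.sum_nonneg fun a₀ _ =>
            mul_nonneg (occ_nonneg d0 hd0 (πk k) (hπk k) (Pk k) (hPk k) m s₀ a₀)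
              ((hPk j m s₀ a₀).1 s))) (sq_nonneg _)
    have hEζ : ∑ k, ∑ j, E k j ≤ ζ := by
      have h6 := hmle (m+1) (Nat.le_add_left 1 m) hH
      simp only [Nat.add_sub_cancel] at h6
      simp only [hE_def, herr_def]
      exact h6
    set T : Fin K → ℝ := fun k => ∑ s, ∑ a, occ d0 π Pt (m+1) s a * err k s a with hT_def
    -- Step 1 : pointwise span bound
    have hpt1 : ∀ s a, (∑ s', |(∑ i, φhat (m+1) s a i * (∑ k, α k (m+1) s' * μhat k (m+1) s' i))
          - Pt (m+1) s a s'|) ≤ αmax * ∑ k, err k s a := by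
      intro s a
      have hptw : ∀ s', |(∑ i, φhat (m+1) s a i * (∑ k, α k (m+1) s' * μhat k (m+1) s' i))
          - Pt (m+1) s a s'| ≤ ∑ k, αmax * |(∑ i, φhat (m+1) s a i * μhat k (m+1) s' i)
            - (∑ i, φstar (m+1) s a i * μstar k (m+1) s' i)| := by
        intro s'
        have e1 : (∑ i, φhat (m+1) s a i * (∑ k, α k (m+1) s' * μhat k (m+1) s' i))
            - Pt (m+1) s a s'
            = ∑ k, α k (m+1) s' * ((∑ i, φhat (m+1) s a i * μhat k (m+1) s' i)
              - (∑ i, φstar (m+1) s a i * μstar k (m+1) s' i)) := by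
          rw [hlowt]
          simp only [hspan, Finset.mul_sum]
          conv_lhs => enter [1]; rw [Finset.sum_comm]
          conv_lhs => enter [2]; rw [Finset.sum_comm]
          rw [← Finset.sum_sub_distrib]
          refine Finset.sum_congr rfl fun k _ => ?_
          rw [mul_sub, Finset.mul_sum, Finset.mul_sum]
          exact congrArg₂ (· - ·) (Finset.sum_congr rfl fun i _ => by ring)
            (Finset.sum_congr rfl fun i _ => by ring)
        calc |(∑ i, φhat (m+1) s a i * (∑ k, α k (m+1) s' * μhat k (m+1) s' i))
              - Pt (m+1) s a s'|
            = |∑ k, α k (m+1) s' * ((∑ i, φhat (m+1) s a i * μhat k (m+1) s' i)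
              - (∑ i, φstar (m+1) s a i * μstar k (m+1) s' i))| := by rw [e1]
          _ ≤ ∑ k, |α k (m+1) s' * ((∑ i, φhat (m+1) s a i * μhat k (m+1) s' i)
              - (∑ i, φstar (m+1) s a i * μstar k (m+1) s' i))| :=
              Finset.abs_sum_le_sum_abs _ _
          _ ≤ ∑ k, αmax * |(∑ i, φhat (m+1) s a i * μhat k (m+1) s' i)
              - (∑ i, φstar (m+1) s a i * μstar k (m+1) s' i)| :=
              Finset.sum_le_sum fun k _ => by
                rw [abs_mul]
                exact mul_le_mul_of_nonneg_right (hαmax k (m+1) s') (abs_nonneg _)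
      calc (∑ s', |(∑ i, φhat (m+1) s a i * (∑ k, α k (m+1) s' * μhat k (m+1) s' i))
            - Pt (m+1) s a s'|)
          ≤ ∑ s', ∑ k, αmax * |(∑ i, φhat (m+1) s a i * μhat k (m+1) s' i)
            - (∑ i, φstar (m+1) s a i * μstar k (m+1) s' i)| :=
            Finset.sum_le_sum fun s' _ => hptw s'
        _ = ∑ k, ∑ s', αmax * |(∑ i, φhat (m+1) s a i * μhat k (m+1) s' i)
            - (∑ i, φstar (m+1) s a i * μstar k (m+1) s' i)| := Finset.sum_comm
        _ = αmax * ∑ k, err k s a := by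
            rw [Finset.mul_sum]
            refine Finset.sum_congr rfl fun k _ => ?_
            rw [herr_def]
            exact (Finset.mul_sum _ _ _).symm
    have hLHS : ∑ s, ∑ a, occ d0 π Pt (m+1) s a *
        (∑ s', |(∑ i, φhat (m+1) s a i * (∑ k, α k (m+1) s' * μhat k (m+1) s' i))
          - Pt (m+1) s a s'|)
        ≤ αmax * ∑ k, T k := by
      have hocc0 : ∀ s a, 0 ≤ occ d0 π Pt (m+1) s a :=
        fun s a => occ_nonneg d0 hd0 π hπ Pt hPt (m+1) s a
      calc ∑ s, ∑ a, occ d0 π Pt (m+1) s a *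
            (∑ s', |(∑ i, φhat (m+1) s a i * (∑ k, α k (m+1) s' * μhat k (m+1) s' i))
              - Pt (m+1) s a s'|)
          ≤ ∑ s, ∑ a, occ d0 π Pt (m+1) s a * (αmax * ∑ k, err k s a) :=
            Finset.sum_le_sum fun s _ => Finset.sum_le_sum fun a _ =>
              mul_le_mul_of_nonneg_left (hpt1 s a) (hocc0 s a)
        _ = ∑ s, ∑ a, ∑ k, αmax * (occ d0 π Pt (m+1) s a * err k s a) := by
            refine Finset.sum_congr rfl fun s _ => Finset.sum_congr rfl fun a _ => ?_
            conv_lhs => rw [Finset.mul_sum]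
            conv_lhs => rw [Finset.mul_sum]
            exact Finset.sum_congr rfl fun k _ => by ring
        _ = ∑ k, ∑ s, ∑ a, αmax * (occ d0 π Pt (m+1) s a * err k s a) := by
            conv_lhs => enter [2, s]; rw [Finset.sum_comm]
            rw [Finset.sum_comm]
        _ = αmax * ∑ k, T k := by
            conv_rhs => rw [Finset.mul_sum]
            refine Finset.sum_congr rfl fun k _ => ?_
            rw [hT_def]
            conv_rhs => rw [Finset.mul_sum]
            refine Finset.sum_congr rfl fun s _ => ?_
            conv_rhs => rw [Finset.mul_sum]
    -- Step 2 : linear form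
    have hdot : ∀ k sb ab, (∑ i, φstar m sb ab i * W k i) = ∑ s, Pt m sb ab s * β k s := by
      intro k sb ab
      simp only [hW_def, Finset.mul_sum]
      rw [Finset.sum_comm]
      refine Finset.sum_congr rfl fun s _ => ?_
      rw [hlowt, Finset.sum_mul]
      exact Finset.sum_congr rfl fun i _ => by ring
    have hocc1 : ∀ s a, occ d0 π Pt (m+1) s a
        = (∑ sb, ∑ ab, occ d0 π Pt m sb ab * Pt m sb ab s) * π (m+1) s a := fun s a => rfl
    have hTW : ∀ k, T k = ∑ sb, ∑ ab, occ d0 π Pt m sb ab * (∑ i, φstar m sb ab i * W k i) := by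
      intro k
      calc T k = ∑ s, (∑ sb, ∑ ab, occ d0 π Pt m sb ab * Pt m sb ab s) * β k s := by
            rw [hT_def]
            simp only [hocc1, hβ_def]
            refine Finset.sum_congr rfl fun s _ => ?_
            conv_rhs => rw [Finset.mul_sum]
            exact Finset.sum_congr rfl fun a _ => by ring
        _ = ∑ sb, ∑ ab, occ d0 π Pt m sb ab * ∑ s, Pt m sb ab s * β k s := by
            simp only [Finset.sum_mul]
            rw [Finset.sum_comm]
            refine Finset.sum_congr rfl fun sb _ => ?_
            rw [Finset.sum_comm]
            refine Finset.sum_congr rfl fun ab _ => ?_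
            conv_rhs => rw [Finset.mul_sum]
            exact Finset.sum_congr rfl fun s _ => by ring
        _ = ∑ sb, ∑ ab, occ d0 π Pt m sb ab * (∑ i, φstar m sb ab i * W k i) :=
            Finset.sum_congr rfl fun sb _ => Finset.sum_congr rfl fun ab _ => by
              rw [hdot k sb ab]
    -- Step 3 : Cauchy-Schwarz with ‖φ*‖ ≤ 1
    have hTn : ∀ k, T k ≤ Real.sqrt (∑ i, W k i ^ 2) := by
      intro k
      rw [hTW k]
      have hb : ∀ sb ab, occ d0 π Pt m sb ab * (∑ i, φstar m sb ab i * W k i)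
          ≤ occ d0 π Pt m sb ab * Real.sqrt (∑ i, W k i ^ 2) := by
        intro sb ab
        refine mul_le_mul_of_nonneg_left ?_ (occ_nonneg d0 hd0 π hπ Pt hPt m sb ab)
        refine le_trans (le_abs_self _) (le_trans (abs_dot_le _ _) ?_)
        exact mul_le_of_le_one_left (Real.sqrt_nonneg _) (hφ m sb ab)
      calc ∑ sb, ∑ ab, occ d0 π Pt m sb ab * (∑ i, φstar m sb ab i * W k i)
          ≤ ∑ sb, ∑ ab, occ d0 π Pt m sb ab * Real.sqrt (∑ i, W k i ^ 2) :=
            Finset.sum_le_sum fun sb _ => Finset.sum_le_sum fun ab _ => hb sb ab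
        _ = (∑ sb, ∑ ab, occ d0 π Pt m sb ab) * Real.sqrt (∑ i, W k i ^ 2) := by
            rw [Finset.sum_mul]
            exact Finset.sum_congr rfl fun sb _ => (Finset.sum_mul _ _ _).symm
        _ = Real.sqrt (∑ i, W k i ^ 2) := by
            rw [occ_sum d0 hd0 π hπ Pt hPt m, one_mul]
    -- Step 4 : eigenvalue coverage
    have hQ : ∀ k, lmin * (∑ i, W k i ^ 2)
        ≤ ∑ sb, ∑ ab, occ d0 (πk k) (Pk k) m sb ab * (∑ i, φstar m sb ab i * W k i) ^ 2 :=
      fun k => lamMin_bound _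
        (fun sb ab => occ_nonneg d0 hd0 (πk k) (hπk k) (Pk k) (hPk k) m sb ab)
        _ _ hlmin.le (hcov k m hmH)
    -- Step 5 : bound quadratic form by MLE errors
    have hπle1 : ∀ s a, π (m+1) s a ≤ 1 := by
      intro s a
      have hs := Finset.single_le_sum (f := π (m+1) s)
        (fun a' _ => (hπ (m+1) s).1 a') (Finset.mem_univ a)
      rwa [(hπ (m+1) s).2] at hs
    have hβsq : ∀ k s, β k s ^ 2 ≤ ∑ a, err k s a ^ 2 := by
      intro k s
      calc β k s ^ 2 ≤ (∑ a, π (m+1) s a) * (∑ a, π (m+1) s a * err k s a ^ 2) := by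
            rw [hβ_def]
            exact weighted_cs _ _ (fun a => (hπ (m+1) s).1 a)
        _ = ∑ a, π (m+1) s a * err k s a ^ 2 := by rw [(hπ (m+1) s).2, one_mul]
        _ ≤ ∑ a, err k s a ^ 2 := Finset.sum_le_sum fun a _ =>
            mul_le_of_le_one_left (sq_nonneg _) (hπle1 s a)
    have hPtspan : ∀ sb ab s, Pt m sb ab s ≤ αmax * ∑ j, Pk j m sb ab s := by
      intro sb ab s
      have e1 : Pt m sb ab s = ∑ j, α j m s * Pk j m sb ab s := by
        rw [hlowt]
        simp only [hspan, Finset.mul_sum]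
        rw [Finset.sum_comm]
        refine Finset.sum_congr rfl fun j _ => ?_
        rw [hlowk, Finset.mul_sum]
        exact Finset.sum_congr rfl fun i _ => by ring
      rw [e1, Finset.mul_sum]
      exact Finset.sum_le_sum fun j _ => mul_le_mul_of_nonneg_right
        (le_trans (le_abs_self _) (hαmax j m s)) ((hPk j m sb ab).1 s)
    have hdotsq : ∀ k sb ab, (∑ i, φstar m sb ab i * W k i) ^ 2
        ≤ αmax * ∑ j, ∑ s, Pk j m sb ab s * ∑ a, err k s a ^ 2 := by
      intro k sb ab
      calc (∑ i, φstar m sb ab i * W k i) ^ 2 = (∑ s, Pt m sb ab s * β k s) ^ 2 := by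
            rw [hdot k sb ab]
        _ ≤ (∑ s, Pt m sb ab s) * (∑ s, Pt m sb ab s * β k s ^ 2) :=
            weighted_cs _ _ (fun s => (hPt m sb ab).1 s)
        _ = ∑ s, Pt m sb ab s * β k s ^ 2 := by rw [(hPt m sb ab).2, one_mul]
        _ ≤ ∑ s, Pt m sb ab s * ∑ a, err k s a ^ 2 := Finset.sum_le_sum fun s _ =>
            mul_le_mul_of_nonneg_left (hβsq k s) ((hPt m sb ab).1 s)
        _ ≤ ∑ s, (αmax * ∑ j, Pk j m sb ab s) * ∑ a, err k s a ^ 2 :=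
            Finset.sum_le_sum fun s _ => mul_le_mul_of_nonneg_right (hPtspan sb ab s)
              (Finset.sum_nonneg fun a _ => sq_nonneg _)
        _ = ∑ s, ∑ j, αmax * (Pk j m sb ab s * ∑ a, err k s a ^ 2) := by
            refine Finset.sum_congr rfl fun s _ => ?_
            conv_lhs => enter [1]; rw [Finset.mul_sum]
            conv_lhs => rw [Finset.sum_mul]
            exact Finset.sum_congr rfl fun j _ => by ring
        _ = ∑ j, ∑ s, αmax * (Pk j m sb ab s * ∑ a, err k s a ^ 2) := Finset.sum_comm
        _ = αmax * ∑ j, ∑ s, Pk j m sb ab s * ∑ a, err k s a ^ 2 := by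
            conv_rhs => rw [Finset.mul_sum]
            refine Finset.sum_congr rfl fun j _ => ?_
            conv_rhs => rw [Finset.mul_sum]
    have hAE : ∀ k j, (Fintype.card Act : ℝ) * E k j
        = ∑ s, (∑ sb, ∑ ab, occ d0 (πk k) (Pk k) m sb ab * Pk j m sb ab s)
            * ∑ a, err k s a ^ 2 := by
      intro k j
      rw [hE_def]
      conv_lhs => rw [Finset.mul_sum]
      refine Finset.sum_congr rfl fun s _ => ?_
      conv_lhs => rw [Finset.mul_sum]
      conv_rhs => rw [Finset.mul_sum]
      refine Finset.sum_congr rfl fun a _ => ?_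
      have hAne' : ((Fintype.card Act : ℝ)) ≠ 0 := ne_of_gt hA0
      field_simp
    have hQE : ∀ k, ∑ sb, ∑ ab, occ d0 (πk k) (Pk k) m sb ab
          * (∑ i, φstar m sb ab i * W k i) ^ 2
        ≤ αmax * ((Fintype.card Act : ℝ) * ∑ j, E k j) := by
      intro k
      have hocck : ∀ sb ab, 0 ≤ occ d0 (πk k) (Pk k) m sb ab := fun sb ab =>
        occ_nonneg d0 hd0 (πk k) (hπk k) (Pk k) (hPk k) m sb ab
      calc ∑ sb, ∑ ab, occ d0 (πk k) (Pk k) m sb ab * (∑ i, φstar m sb ab i * W k i) ^ 2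
          ≤ ∑ sb, ∑ ab, occ d0 (πk k) (Pk k) m sb ab *
              (αmax * ∑ j, ∑ s, Pk j m sb ab s * ∑ a, err k s a ^ 2) :=
            Finset.sum_le_sum fun sb _ => Finset.sum_le_sum fun ab _ =>
              mul_le_mul_of_nonneg_left (hdotsq k sb ab) (hocck sb ab)
        _ = ∑ sb, ∑ ab, ∑ j, ∑ s, αmax * (occ d0 (πk k) (Pk k) m sb ab
              * (Pk j m sb ab s * ∑ a, err k s a ^ 2)) := by
            refine Finset.sum_congr rfl fun sb _ => Finset.sum_congr rfl fun ab _ => ?_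
            conv_lhs => enter [2]; rw [Finset.mul_sum]
            conv_lhs => rw [Finset.mul_sum]
            refine Finset.sum_congr rfl fun j _ => ?_
            conv_lhs => enter [2]; rw [Finset.mul_sum]
            conv_lhs => rw [Finset.mul_sum]
            exact Finset.sum_congr rfl fun s _ => by ring
        _ = ∑ j, ∑ s, ∑ sb, ∑ ab, αmax * (occ d0 (πk k) (Pk k) m sb ab
              * (Pk j m sb ab s * ∑ a, err k s a ^ 2)) := by
            conv_lhs => enter [2, sb]; rw [Finset.sum_comm]
            rw [Finset.sum_comm]
            refine Finset.sum_congr rfl fun j _ => ?_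
            conv_lhs => enter [2, sb]; rw [Finset.sum_comm]
            rw [Finset.sum_comm]
        _ = αmax * ∑ j, ∑ s, (∑ sb, ∑ ab, occ d0 (πk k) (Pk k) m sb ab * Pk j m sb ab s)
              * ∑ a, err k s a ^ 2 := by
            conv_rhs => rw [Finset.mul_sum]
            refine Finset.sum_congr rfl fun j _ => ?_
            conv_rhs => rw [Finset.mul_sum]
            refine Finset.sum_congr rfl fun s _ => ?_
            conv_rhs => rw [Finset.sum_mul]
            conv_rhs => rw [Finset.mul_sum]
            refine Finset.sum_congr rfl fun sb _ => ?_
            conv_rhs => rw [Finset.sum_mul]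
            conv_rhs => rw [Finset.mul_sum]
            exact Finset.sum_congr rfl fun ab _ => by ring
        _ = αmax * ((Fintype.card Act : ℝ) * ∑ j, E k j) := by
            refine congrArg (αmax * ·) ?_
            conv_rhs => rw [Finset.mul_sum]
            exact Finset.sum_congr rfl fun j _ => (hAE k j).symm
    -- Step 6 : per-task bound
    have hTk : ∀ k, T k ≤
        Real.sqrt (αmax * (Fintype.card Act : ℝ) / lmin * ∑ j, E k j) := by
      intro k
      refine le_trans (hTn k) (Real.sqrt_le_sqrt ?_)
      have h5 := le_trans (hQ k) (hQE k)
      have h7 : (∑ i, W k i ^ 2) ≤ αmax * ((Fintype.card Act : ℝ) * ∑ j, E k j) / lmin :=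
        (le_div_iff₀ hlmin).2 (by linarith [h5])
      calc (∑ i, W k i ^ 2) ≤ αmax * ((Fintype.card Act : ℝ) * ∑ j, E k j) / lmin := h7
        _ = αmax * (Fintype.card Act : ℝ) / lmin * ∑ j, E k j := by ring
    have hEj0 : ∀ k, (0:ℝ) ≤ ∑ j, E k j := fun k => Finset.sum_nonneg fun j _ => hE0 k j
    have hc0 : (0:ℝ) ≤ αmax * (Fintype.card Act : ℝ) / lmin :=
      div_nonneg (mul_nonneg hα0 hA0.le) hlmin.le
    have hsum : ∑ k, T k ≤
        Real.sqrt ((K:ℝ) * (αmax * (Fintype.card Act : ℝ) / lmin * ζ)) := by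
      calc ∑ k, T k
          ≤ ∑ k, Real.sqrt (αmax * (Fintype.card Act : ℝ) / lmin * ∑ j, E k j) :=
            Finset.sum_le_sum fun k _ => hTk k
        _ ≤ Real.sqrt ((K:ℝ) * ∑ k, (αmax * (Fintype.card Act : ℝ) / lmin * ∑ j, E k j)) :=
            sum_sqrt_le _ (fun k => mul_nonneg hc0 (hEj0 k))
        _ ≤ Real.sqrt ((K:ℝ) * (αmax * (Fintype.card Act : ℝ) / lmin * ζ)) := by
            refine Real.sqrt_le_sqrt ?_
            refine mul_le_mul_of_nonneg_left ?_ (Nat.cast_nonneg K)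
            have e2 : ∑ k, (αmax * (Fintype.card Act : ℝ) / lmin * ∑ j, E k j)
                = αmax * (Fintype.card Act : ℝ) / lmin * ∑ k, ∑ j, E k j := by
              conv_rhs => rw [Finset.mul_sum]
            rw [e2]
            exact mul_le_mul_of_nonneg_left hEζ hc0
    refine le_trans hLHS ?_
    calc αmax * ∑ k, T k
        ≤ αmax * Real.sqrt ((K:ℝ) * (αmax * (Fintype.card Act : ℝ) / lmin * ζ)) :=
          mul_le_mul_of_nonneg_left hsum hα0
      _ = Real.sqrt ((Fintype.card Act : ℝ) * αmax ^ 3 * (K:ℝ) * ζ / lmin) := by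
          rw [show (Fintype.card Act : ℝ) * αmax ^ 3 * (K:ℝ) * ζ / lmin
              = αmax ^ 2 * ((K:ℝ) * (αmax * (Fintype.card Act : ℝ) / lmin * ζ)) from by ring,
            Real.sqrt_mul (sq_nonneg αmax), Real.sqrt_sq hα0]
  · intro hnorm h h1 hH g hg
    have hk : ∀ k : Fin K, Real.sqrt (∑ i, (∑ s', g s' * (α k h s' * μhat k h s' i)) ^ 2)
        ≤ (Finset.univ.sup' Finset.univ_nonempty fun s' : S => |α k h s'|) * Real.sqrt d := by
      intro k
      set M := Finset.univ.sup' Finset.univ_nonempty fun s' : S => |α k h s'| with hM_def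
      have hMle : ∀ s', |α k h s'| ≤ M := by
        intro s'
        rw [hM_def]
        exact Finset.le_sup' (fun s'' : S => |α k h s''|) (Finset.mem_univ s')
      have hM0 : 0 ≤ M := le_trans (abs_nonneg _) (hMle (Classical.arbitrary S))
      rcases eq_or_lt_of_le hM0 with hM0' | hMpos
      · have hz : ∀ s', α k h s' = 0 := fun s' =>
          abs_eq_zero.1 (le_antisymm (hM0' ▸ hMle s') (abs_nonneg _))
        have hzz : Real.sqrt (∑ i, (∑ s', g s' * (α k h s' * μhat k h s' i)) ^ 2) = 0 := by
          simp [hz]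
        rw [hzz]
        exact mul_nonneg hM0 (Real.sqrt_nonneg _)
      · have hb : ∀ s', -1 ≤ g s' * α k h s' / M ∧ g s' * α k h s' / M ≤ 1 := by
          intro s'
          have habs : |g s' * α k h s' / M| ≤ 1 := by
            rw [abs_div, abs_of_pos hMpos, div_le_one hMpos, abs_mul]
            calc |g s'| * |α k h s'| ≤ 1 * M := by
                  refine mul_le_mul ?_ (hMle s') (abs_nonneg _) zero_le_one
                  rw [abs_of_nonneg (hg s').1]
                  exact (hg s').2
              _ = M := one_mul M
          exact abs_le.1 habs
        have hn := hnorm k h (fun s' => g s' * α k h s' / M) hb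
        have key : ∀ i, (∑ s', g s' * (α k h s' * μhat k h s' i))
            = M * ∑ s', (g s' * α k h s' / M) * μhat k h s' i := by
          intro i
          conv_rhs => rw [Finset.mul_sum]
          refine Finset.sum_congr rfl fun s' _ => ?_
          field_simp
        calc Real.sqrt (∑ i, (∑ s', g s' * (α k h s' * μhat k h s' i)) ^ 2)
            = Real.sqrt (∑ i, M ^ 2 * (∑ s', (g s' * α k h s' / M) * μhat k h s' i) ^ 2) := by
              refine congrArg Real.sqrt (Finset.sum_congr rfl fun i _ => ?_)
              rw [key i, mul_pow]
          _ = M * Real.sqrt (∑ i, (∑ s', (g s' * α k h s' / M) * μhat k h s' i) ^ 2) := by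
              rw [← Finset.mul_sum, Real.sqrt_mul (sq_nonneg M), Real.sqrt_sq hM0]
          _ ≤ M * Real.sqrt d := mul_le_mul_of_nonneg_left hn hM0
    have e0 : ∀ i : Fin d, (∑ s', g s' * (∑ k, α k h s' * μhat k h s' i))
        = ∑ k, ∑ s', g s' * (α k h s' * μhat k h s' i) := by
      intro i
      conv_lhs => enter [2, s']; rw [Finset.mul_sum]
      rw [Finset.sum_comm]
    calc Real.sqrt (∑ i, (∑ s', g s' * (∑ k, α k h s' * μhat k h s' i)) ^ 2)
        = Real.sqrt (∑ i, (∑ k, ∑ s', g s' * (α k h s' * μhat k h s' i)) ^ 2) := by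
          refine congrArg Real.sqrt (Finset.sum_congr rfl fun i _ => ?_)
          rw [e0 i]
      _ ≤ ∑ k, Real.sqrt (∑ i, (∑ s', g s' * (α k h s' * μhat k h s' i)) ^ 2) :=
          sqrt_sum_sq_sum_le _
      _ ≤ ∑ k, (Finset.univ.sup' Finset.univ_nonempty fun s' : S => |α k h s'|)
            * Real.sqrt d := Finset.sum_le_sum fun k _ => hk k
      _ = (∑ k, Finset.univ.sup' Finset.univ_nonempty fun s' : S => |α k h s'|)
            * Real.sqrt d := (Finset.sum_mul _ _ _).symm
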